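/- Fix reference prices P_X, P_Y > 0, p₀ = P_X/P_Y, and budget B > 0. Let ψ(p_X, p_Y) = 1 for (p_X, p_Y) ∈ (0, P_X] × (0, P_Y] and 0 otherwise. Set X₀ = B/(2P_X), Y₀ = B/(2P_Y), and L(p) = (1/2)·√(X₀·Y₀·p) for p > 0; this is exactly the liquidity allocation implied by the constant product trading function f(x, y) = x·y with initial reserves (X₀, Y₀) at spot exchange rate p₀. Then (L, X₀, Y₀) is feasible (with all three constraints holding with equality) and optimal for ψ. -/

import Mathlib

open MeasureTheory Set
open scoped ENNReal

noncomputable section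

/-- The open positive orthant of `ℝ²`, on which prices live. -/
def orth : Set (ℝ × ℝ) := Set.Ioi 0 ×ˢ Set.Ioi 0

/-- The expected CFMM inefficiency `I_ψ(L) = ∬ ψ(p_X,p_Y) / (p_Y·L(p_X/p_Y)) dp_X dp_Y`,
a Lebesgue integral valued in `[0,∞]`; `ENNReal` division encodes the conventions
`c/0 = ∞` for `c > 0` and `0/0 = 0`. -/
def Ineff (ψ : ℝ × ℝ → ℝ) (L : ℝ → ℝ) : ℝ≥0∞ :=
  ∫⁻ q in orth, ENNReal.ofReal (ψ q) / ENNReal.ofReal (q.2 * L (q.1 / q.2))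

/-- Feasibility of a triple `(L, X₀, Y₀)` of a liquidity allocation and initial reserves,
for reference prices `P_X, P_Y` (so `p₀ = P_X / P_Y`) and budget `B`. -/
def Feasible (PX PY B : ℝ) (L : ℝ → ℝ) (X0 Y0 : ℝ) : Prop :=
  Measurable L ∧ (∀ p ∈ Set.Ioi (0:ℝ), 0 ≤ L p) ∧ 0 ≤ X0 ∧ 0 ≤ Y0 ∧
  (∫⁻ p in Set.Ioc (0:ℝ) (PX / PY), ENNReal.ofReal (L p / p)) ≤ ENNReal.ofReal Y0 ∧
  (∫⁻ p in Set.Ioi (PX / PY), ENNReal.ofReal (L p / p ^ 2)) ≤ ENNReal.ofReal X0 ∧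
  PX * X0 + PY * Y0 ≤ B

/-- A feasible triple is optimal for the belief `ψ` if it minimizes the expected CFMM
inefficiency over all feasible triples. -/
def IsOptimal (PX PY B : ℝ) (ψ : ℝ × ℝ → ℝ) (L : ℝ → ℝ) (X0 Y0 : ℝ) : Prop :=
  Feasible PX PY B L X0 Y0 ∧
  ∀ L' X0' Y0', Feasible PX PY B L' X0' Y0' → Ineff ψ L ≤ Ineff ψ L'

/-! ### Auxiliary lemmas -/

lemma cfmm_lintA (a k : ℝ) (ha : 0 < a) (hk : 0 ≤ k) :
    (∫⁻ p in Set.Ioc (0:ℝ) a, ENNReal.ofReal (k * p ^ (-1/2 : ℝ)))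
      = ENNReal.ofReal (2 * k * Real.sqrt a) := by
  rw [← ofReal_integral_eq_lintegral_ofReal]
  · congr 1
    rw [← intervalIntegral.integral_of_le ha.le, intervalIntegral.integral_const_mul,
      integral_rpow (Or.inl (by norm_num))]
    rw [Real.sqrt_eq_rpow]
    rw [Real.zero_rpow (by norm_num)]
    ring_nf
  · exact (intervalIntegrable_iff_integrableOn_Ioc_of_le ha.le).mp
      ((intervalIntegral.intervalIntegrable_rpow' (by norm_num)).const_mul k)
  · filter_upwards [ae_restrict_mem measurableSet_Ioc] with p hp
    exact mul_nonneg hk (Real.rpow_nonneg hp.1.le _)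

lemma cfmm_lintB (a k : ℝ) (ha : 0 < a) (hk : 0 ≤ k) :
    (∫⁻ p in Set.Ioi a, ENNReal.ofReal (k * p ^ (-3/2 : ℝ)))
      = ENNReal.ofReal (2 * k / Real.sqrt a) := by
  rw [← ofReal_integral_eq_lintegral_ofReal]
  · congr 1
    rw [MeasureTheory.integral_const_mul, integral_Ioi_rpow_of_lt (by norm_num) ha]
    rw [Real.sqrt_eq_rpow]
    rw [show (-3/2 + 1 : ℝ) = -(1/2) by norm_num, Real.rpow_neg ha.le]
    have : (a:ℝ) ^ (1/2:ℝ) ≠ 0 := (Real.rpow_pos_of_pos ha _).ne'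
    field_simp
  · exact (integrableOn_Ioi_rpow_of_lt (by norm_num) ha).const_mul k
  · filter_upwards [ae_restrict_mem measurableSet_Ioi] with p hp
    exact mul_nonneg hk (Real.rpow_nonneg (ha.le.trans hp.le) _)

lemma cfmm_lint_split (p0 : ℝ) (hp0 : 0 < p0) (f : ℝ → ℝ≥0∞) :
    ∫⁻ p in Set.Ioi (0:ℝ), f p
      = (∫⁻ p in Set.Ioc (0:ℝ) p0, f p) + ∫⁻ p in Set.Ioi p0, f p := by
  rw [← Set.Ioc_union_Ioi_eq_Ioi hp0.le,
    lintegral_union measurableSet_Ioi]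
  rw [Set.disjoint_left]
  intro p hp1 hp2
  exact absurd hp1.2 (not_le.mpr hp2)

lemma cfmm_lint_scale {y : ℝ} (hy : 0 < y) (f : ℝ → ℝ≥0∞) (hf : Measurable f) (b : ℝ) :
    ∫⁻ x in Set.Ioc 0 b, f (x / y) = ENNReal.ofReal y * ∫⁻ p in Set.Ioc 0 (b / y), f p := by
  have hvol : (volume : Measure ℝ) = ENNReal.ofReal y • Measure.map (y * ·) volume := by
    rw [Real.map_volume_mul_left hy.ne', smul_smul, ← ENNReal.ofReal_mul hy.le,
      abs_of_pos (inv_pos.mpr hy), mul_inv_cancel₀ hy.ne', ENNReal.ofReal_one, one_smul]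
  have hind : Measurable ((Set.Ioc (0:ℝ) b).indicator (fun x => f (x / y))) :=
    (hf.comp (measurable_id.div_const y)).indicator measurableSet_Ioc
  calc ∫⁻ x in Set.Ioc 0 b, f (x / y)
      = ∫⁻ x, (Set.Ioc (0:ℝ) b).indicator (fun x => f (x / y)) x ∂volume := by
        rw [← lintegral_indicator measurableSet_Ioc]
    _ = ENNReal.ofReal y * ∫⁻ x, (Set.Ioc (0:ℝ) b).indicator (fun x => f (x / y)) x
          ∂(Measure.map (y * ·) volume) := by
        conv_lhs => rw [hvol]
        rw [lintegral_smul_measure, smul_eq_mul]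
    _ = ENNReal.ofReal y * ∫⁻ p, (Set.Ioc (0:ℝ) b).indicator (fun x => f (x / y)) (y * p)
          ∂volume := by
        rw [lintegral_map hind (measurable_const_mul y)]
    _ = ENNReal.ofReal y * ∫⁻ p, (Set.Ioc (0:ℝ) (b / y)).indicator f p ∂volume := by
        congr 1
        refine lintegral_congr fun p => ?_
        by_cases hp : p ∈ Set.Ioc (0:ℝ) (b / y)
        · have h1 : y * p ∈ Set.Ioc (0:ℝ) b :=
            ⟨mul_pos hy hp.1, by rw [mul_comm]; exact (le_div_iff₀ hy).mp hp.2⟩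
          rw [Set.indicator_of_mem h1, Set.indicator_of_mem hp,
            mul_div_assoc]
          congr 2
          field_simp
        · have h1 : y * p ∉ Set.Ioc (0:ℝ) b := by
            intro h
            have hppos : 0 < p := by nlinarith [h.1]
            exact hp ⟨hppos, (le_div_iff₀ hy).mpr (by rw [mul_comm] at h; exact h.2)⟩
          rw [Set.indicator_of_notMem h1, Set.indicator_of_notMem hp]
    _ = ENNReal.ofReal y * ∫⁻ p in Set.Ioc (0:ℝ) (b / y), f p := by
        rw [lintegral_indicator measurableSet_Ioc]

lemma cfmm_Ineff_reduce (PX PY : ℝ) (hPX : 0 < PX) (hPY : 0 < PY)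
    (L' : ℝ → ℝ) (hm : Measurable L') :
    Ineff (fun q => if q.1 ∈ Set.Ioc (0:ℝ) PX ∧ q.2 ∈ Set.Ioc (0:ℝ) PY then 1 else 0) L'
      = ∫⁻ p in Set.Ioi (0:ℝ),
          ENNReal.ofReal (min PY (PX / p)) * (ENNReal.ofReal (L' p))⁻¹ := by
  have hmF : Measurable (fun q : ℝ × ℝ =>
      ENNReal.ofReal ((fun q : ℝ × ℝ => if q.1 ∈ Set.Ioc (0:ℝ) PX ∧ q.2 ∈ Set.Ioc (0:ℝ) PY
        then (1:ℝ) else 0) q) / ENNReal.ofReal (q.2 * L' (q.1 / q.2))) := by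
    apply Measurable.div
    · apply Measurable.ennreal_ofReal
      have hset : MeasurableSet {q : ℝ×ℝ | q.1 ∈ Set.Ioc (0:ℝ) PX ∧ q.2 ∈ Set.Ioc (0:ℝ) PY} := by
        have : {q : ℝ×ℝ | q.1 ∈ Set.Ioc (0:ℝ) PX ∧ q.2 ∈ Set.Ioc (0:ℝ) PY}
            = Set.Ioc (0:ℝ) PX ×ˢ Set.Ioc (0:ℝ) PY := by ext q; simp [Set.mem_prod]
        rw [this]; exact measurableSet_Ioc.prod measurableSet_Ioc
      exact Measurable.ite hset measurable_const measurable_const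
    · exact (measurable_snd.mul (hm.comp (measurable_fst.div measurable_snd))).ennreal_ofReal
  have key : Ineff (fun q => if q.1 ∈ Set.Ioc (0:ℝ) PX ∧ q.2 ∈ Set.Ioc (0:ℝ) PY then 1 else 0) L'
      = ∫⁻ y in Set.Ioi (0:ℝ), ∫⁻ x in Set.Ioi (0:ℝ),
          ENNReal.ofReal (if x ∈ Set.Ioc (0:ℝ) PX ∧ y ∈ Set.Ioc (0:ℝ) PY then (1:ℝ) else 0)
            / ENNReal.ofReal (y * L' (x / y)) := by
    rw [Ineff, orth, Measure.volume_eq_prod, ← Measure.prod_restrict,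
      lintegral_prod_symm _ hmF.aemeasurable]
  rw [key]
  have inner_eq : ∀ y ∈ Set.Ioi (0:ℝ),
      (∫⁻ x in Set.Ioi (0:ℝ),
        ENNReal.ofReal (if x ∈ Set.Ioc (0:ℝ) PX ∧ y ∈ Set.Ioc (0:ℝ) PY then (1:ℝ) else 0)
          / ENNReal.ofReal (y * L' (x / y)))
      = (Set.Ioc (0:ℝ) PY).indicator
          (fun y => ∫⁻ p in Set.Ioc (0:ℝ) (PX / y), (ENNReal.ofReal (L' p))⁻¹) y := by
    intro y hy
    by_cases hyP : y ∈ Set.Ioc (0:ℝ) PY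
    · rw [Set.indicator_of_mem hyP]
      have hyp : (0:ℝ) < y := hyP.1
      have step1 : (fun x => ENNReal.ofReal
            (if x ∈ Set.Ioc (0:ℝ) PX ∧ y ∈ Set.Ioc (0:ℝ) PY then (1:ℝ) else 0)
          / ENNReal.ofReal (y * L' (x / y)))
          = fun x => (Set.Ioc (0:ℝ) PX).indicator
              (fun x => (ENNReal.ofReal (y * L' (x / y)))⁻¹) x := by
        funext x
        by_cases hx : x ∈ Set.Ioc (0:ℝ) PX
        · rw [Set.indicator_of_mem hx, if_pos ⟨hx, hyP⟩, ENNReal.ofReal_one, one_div]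
        · rw [Set.indicator_of_notMem hx, if_neg (fun h => hx h.1), ENNReal.ofReal_zero,
            ENNReal.zero_div]
      rw [step1, lintegral_indicator measurableSet_Ioc,
        Measure.restrict_restrict measurableSet_Ioc,
        Set.inter_eq_self_of_subset_left Set.Ioc_subset_Ioi_self,
        cfmm_lint_scale hyp (fun p => (ENNReal.ofReal (y * L' p))⁻¹)
          ((measurable_const.mul hm).ennreal_ofReal.inv) PX,
        ← lintegral_const_mul' _ _ ENNReal.ofReal_ne_top]
      refine setLIntegral_congr_fun measurableSet_Ioc (fun p hp => ?_)
      rw [ENNReal.ofReal_mul hyp.le,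
        ENNReal.mul_inv (Or.inl (ENNReal.ofReal_pos.mpr hyp).ne') (Or.inl ENNReal.ofReal_ne_top),
        ← mul_assoc, ENNReal.mul_inv_cancel (ENNReal.ofReal_pos.mpr hyp).ne'
          ENNReal.ofReal_ne_top, one_mul]
    · rw [Set.indicator_of_notMem hyP]
      have : ∀ x : ℝ, ENNReal.ofReal
            (if x ∈ Set.Ioc (0:ℝ) PX ∧ y ∈ Set.Ioc (0:ℝ) PY then (1:ℝ) else 0)
          / ENNReal.ofReal (y * L' (x / y)) = 0 := fun x => by
        rw [if_neg (fun h => hyP h.2), ENNReal.ofReal_zero, ENNReal.zero_div]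
      simp only [this, lintegral_const, zero_mul]
  rw [setLIntegral_congr_fun measurableSet_Ioi inner_eq,
    lintegral_indicator measurableSet_Ioc, Measure.restrict_restrict measurableSet_Ioc,
    Set.inter_eq_self_of_subset_left Set.Ioc_subset_Ioi_self]
  have step2 : ∀ y ∈ Set.Ioc (0:ℝ) PY,
      (∫⁻ p in Set.Ioc (0:ℝ) (PX / y), (ENNReal.ofReal (L' p))⁻¹)
      = ∫⁻ p in Set.Ioi (0:ℝ),
          (if y * p ≤ PX then (ENNReal.ofReal (L' p))⁻¹ else 0) := by
    intro y hy
    have hyp : (0:ℝ) < y := hy.1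
    have hms : MeasurableSet {p : ℝ | y * p ≤ PX} :=
      measurableSet_le (measurable_id.const_mul y) measurable_const
    have hset : Set.Ioc (0:ℝ) (PX / y) = {p : ℝ | y * p ≤ PX} ∩ Set.Ioi 0 := by
      ext p
      simp only [Set.mem_inter_iff, Set.mem_setOf_eq, Set.mem_Ioi, Set.mem_Ioc]
      constructor
      · rintro ⟨hp1, hp2⟩
        have := (le_div_iff₀ hyp).mp hp2
        exact ⟨by linarith [mul_comm p y], hp1⟩
      · rintro ⟨hp1, hp2⟩
        exact ⟨hp2, (le_div_iff₀ hyp).mpr (by linarith [mul_comm p y])⟩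
    calc ∫⁻ p in Set.Ioc (0:ℝ) (PX / y), (ENNReal.ofReal (L' p))⁻¹
        = ∫⁻ p in {p : ℝ | y * p ≤ PX} ∩ Set.Ioi 0, (ENNReal.ofReal (L' p))⁻¹ := by
          rw [hset]
      _ = ∫⁻ p in {p : ℝ | y * p ≤ PX}, (ENNReal.ofReal (L' p))⁻¹
            ∂(volume.restrict (Set.Ioi 0)) := by
          rw [Measure.restrict_restrict hms]
      _ = ∫⁻ p in Set.Ioi (0:ℝ), {p : ℝ | y * p ≤ PX}.indicator
            (fun p => (ENNReal.ofReal (L' p))⁻¹) p := by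
          rw [lintegral_indicator hms]
      _ = ∫⁻ p in Set.Ioi (0:ℝ), (if y * p ≤ PX then (ENNReal.ofReal (L' p))⁻¹ else 0) := by
          refine lintegral_congr fun p => ?_
          simp [Set.indicator_apply, Set.mem_setOf_eq]
  rw [setLIntegral_congr_fun measurableSet_Ioc step2]
  have hswap : AEMeasurable (Function.uncurry fun y p =>
      (if y * p ≤ PX then (ENNReal.ofReal (L' p))⁻¹ else 0))
      ((volume.restrict (Set.Ioc (0:ℝ) PY)).prod (volume.restrict (Set.Ioi (0:ℝ)))) := by
    refine Measurable.aemeasurable ?_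
    have : (Function.uncurry fun y p =>
        (if y * p ≤ PX then (ENNReal.ofReal (L' p))⁻¹ else 0))
        = fun z : ℝ × ℝ => if z.1 * z.2 ≤ PX then (ENNReal.ofReal (L' z.2))⁻¹ else 0 := rfl
    rw [this]
    exact Measurable.ite (measurableSet_le (measurable_fst.mul measurable_snd)
      measurable_const) ((hm.comp measurable_snd).ennreal_ofReal.inv) measurable_const
  rw [lintegral_lintegral_swap hswap]
  refine setLIntegral_congr_fun measurableSet_Ioi (fun p hp => ?_)
  have hpp : (0:ℝ) < p := hp
  have hms : MeasurableSet {y : ℝ | y * p ≤ PX} :=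
    measurableSet_le (measurable_id.mul_const p) measurable_const
  have hset : {y : ℝ | y * p ≤ PX} ∩ Set.Ioc 0 PY = Set.Ioc 0 (min PY (PX / p)) := by
    ext y
    simp only [Set.mem_inter_iff, Set.mem_setOf_eq, Set.mem_Ioc, le_min_iff]
    constructor
    · rintro ⟨h1, h2, h3⟩
      exact ⟨h2, h3, (le_div_iff₀ hpp).mpr h1⟩
    · rintro ⟨h1, h2, h3⟩
      exact ⟨(le_div_iff₀ hpp).mp h3, h1, h2⟩
  calc ∫⁻ y in Set.Ioc (0:ℝ) PY, (if y * p ≤ PX then (ENNReal.ofReal (L' p))⁻¹ else 0)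
      = ∫⁻ y in Set.Ioc (0:ℝ) PY, {y : ℝ | y * p ≤ PX}.indicator
          (fun _ => (ENNReal.ofReal (L' p))⁻¹) y := by
        refine lintegral_congr fun y => ?_
        simp [Set.indicator_apply, Set.mem_setOf_eq]
    _ = ∫⁻ y in {y : ℝ | y * p ≤ PX}, (ENNReal.ofReal (L' p))⁻¹
          ∂(volume.restrict (Set.Ioc 0 PY)) := by
        rw [lintegral_indicator hms]
    _ = ∫⁻ y in {y : ℝ | y * p ≤ PX} ∩ Set.Ioc 0 PY, (ENNReal.ofReal (L' p))⁻¹ := by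
        rw [Measure.restrict_restrict hms]
    _ = ENNReal.ofReal (min PY (PX / p)) * (ENNReal.ofReal (L' p))⁻¹ := by
        rw [hset, setLIntegral_const, Real.volume_Ioc, sub_zero, mul_comm]

lemma cfmm_div_sqrt1 (A t p : ℝ) (ht : 0 < t) (hp : 0 < p) :
    A / ((t/2) * p ^ (1/2:ℝ)) = (2*A/t) * p ^ (-1/2:ℝ) := by
  rw [show (-1/2:ℝ) = -(1/2) by norm_num, Real.rpow_neg hp.le]
  have h3 : p ^ (1/2:ℝ) ≠ 0 := (Real.rpow_pos_of_pos hp _).ne'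
  field_simp

lemma cfmm_div_sqrt2 (A t p : ℝ) (ht : 0 < t) (hp : 0 < p) :
    (A / p) / ((t/2) * p ^ (1/2:ℝ)) = (2*A/t) * p ^ (-3/2:ℝ) := by
  have h32 : p ^ (-3/2:ℝ) = (p * p ^ (1/2:ℝ))⁻¹ := by
    rw [show (-3/2:ℝ) = -(1 + 1/2) by norm_num, Real.rpow_neg hp.le, Real.rpow_add hp,
      Real.rpow_one]
  rw [h32]
  have h3 : p ^ (1/2:ℝ) ≠ 0 := (Real.rpow_pos_of_pos hp _).ne'
  field_simp

lemma cfmm_pow_half1 (A p : ℝ) (hA : 0 ≤ A) (hp : 0 < p) :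
    (A * (A / p)) ^ (1/2:ℝ) = A * p ^ (-1/2:ℝ) := by
  rw [show A * (A/p) = A^2/p by ring, Real.div_rpow (sq_nonneg A) hp.le,
    show (-1/2:ℝ) = -(1/2) by norm_num, Real.rpow_neg hp.le,
    ← Real.rpow_natCast A 2, ← Real.rpow_mul hA,
    show ((2:ℕ):ℝ)*(1/2) = 1 by norm_num, Real.rpow_one, div_eq_mul_inv]

lemma cfmm_pow_half2 (A p : ℝ) (hA : 0 ≤ A) (hp : 0 < p) :
    ((A / p) * (A / p^2)) ^ (1/2:ℝ) = A * p ^ (-3/2:ℝ) := by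
  have h32 : p ^ (3:ℝ) = p^2 * p := by
    rw [show (3:ℝ) = ((3:ℕ):ℝ) by norm_num, Real.rpow_natCast]; ring
  rw [show (A/p) * (A/p^2) = A^2 / (p^2*p) by ring, ← h32,
    Real.div_rpow (sq_nonneg A) (Real.rpow_nonneg hp.le _),
    ← Real.rpow_natCast A 2, ← Real.rpow_mul hA,
    show ((2:ℕ):ℝ)*(1/2) = 1 by norm_num, Real.rpow_one,
    ← Real.rpow_mul hp.le, show (3:ℝ)*(1/2) = 3/2 by norm_num,
    show (-3/2:ℝ) = -(3/2) by norm_num, Real.rpow_neg hp.le, div_eq_mul_inv]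

theorem stmt_12 (PX PY B : ℝ) (hPX : 0 < PX) (hPY : 0 < PY) (hB : 0 < B)
    (ψ : ℝ × ℝ → ℝ)
    (hψ : ψ = fun q => if q.1 ∈ Set.Ioc (0:ℝ) PX ∧ q.2 ∈ Set.Ioc (0:ℝ) PY
        then 1 else 0)
    (X0 Y0 : ℝ) (hX0 : X0 = B / (2 * PX)) (hY0 : Y0 = B / (2 * PY))
    (L : ℝ → ℝ) (hL : L = fun p => (1 / 2) * Real.sqrt (X0 * Y0 * p)) :
    (∫⁻ p in Set.Ioc (0:ℝ) (PX / PY), ENNReal.ofReal (L p / p)) = ENNReal.ofReal Y0 ∧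
    (∫⁻ p in Set.Ioi (PX / PY), ENNReal.ofReal (L p / p ^ 2)) = ENNReal.ofReal X0 ∧
    PX * X0 + PY * Y0 = B ∧
    Feasible PX PY B L X0 Y0 ∧
    ∀ L' X0' Y0', Feasible PX PY B L' X0' Y0' → Ineff ψ L ≤ Ineff ψ L' := by
  subst hψ
  have hp0 : 0 < PX / PY := div_pos hPX hPY
  have hX0p : 0 < X0 := by rw [hX0]; positivity
  have hY0p : 0 < Y0 := by rw [hY0]; positivity
  have hXY : 0 < X0 * Y0 := mul_pos hX0p hY0p
  set s := Real.sqrt (X0 * Y0) with hs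
  have hsp : 0 < s := Real.sqrt_pos.mpr hXY
  have hLval : ∀ p : ℝ, 0 < p → L p = (s/2) * p ^ (1/2:ℝ) := by
    intro p hp
    rw [hL]
    simp only
    rw [Real.sqrt_mul hXY.le, ← hs, Real.sqrt_eq_rpow p]
    ring
  have hLpos : ∀ p : ℝ, 0 < p → 0 < L p := by
    intro p hp
    rw [hLval p hp]
    have := Real.rpow_pos_of_pos hp (1/2:ℝ)
    positivity
  have hY0eq : s * Real.sqrt (PX / PY) = Y0 := by
    rw [hs, ← Real.sqrt_mul hXY.le]
    have h : X0 * Y0 * (PX / PY) = Y0 ^ 2 := by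
      rw [hX0, hY0]; field_simp
    rw [h, Real.sqrt_sq hY0p.le]
  have hX0eq : s / Real.sqrt (PX / PY) = X0 := by
    rw [hs, ← Real.sqrt_div hXY.le]
    have h : X0 * Y0 / (PX / PY) = X0 ^ 2 := by
      rw [hX0, hY0]; field_simp
    rw [h, Real.sqrt_sq hX0p.le]
  have hmL : Measurable L := by
    rw [hL]
    exact (Real.continuous_sqrt.measurable.comp
      (measurable_id.const_mul (X0 * Y0))).const_mul (1/2)
  -- first constraint, with equality
  have hT1 : (∫⁻ p in Set.Ioc (0:ℝ) (PX / PY), ENNReal.ofReal (L p / p))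
      = ENNReal.ofReal Y0 := by
    have congr1 : ∀ p ∈ Set.Ioc (0:ℝ) (PX / PY),
        ENNReal.ofReal (L p / p) = ENNReal.ofReal ((s/2) * p ^ (-1/2:ℝ)) := by
      intro p hp
      congr 1
      rw [hLval p hp.1, show (-1/2:ℝ) = 1/2 - 1 by norm_num, Real.rpow_sub hp.1,
        Real.rpow_one]
      ring
    rw [setLIntegral_congr_fun measurableSet_Ioc congr1,
      cfmm_lintA (PX/PY) (s/2) hp0 (by positivity)]
    congr 1
    rw [show 2 * (s/2) * Real.sqrt (PX/PY) = s * Real.sqrt (PX/PY) by ring, hY0eq]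
  -- second constraint, with equality
  have hT2 : (∫⁻ p in Set.Ioi (PX / PY), ENNReal.ofReal (L p / p ^ 2))
      = ENNReal.ofReal X0 := by
    have congr2 : ∀ p ∈ Set.Ioi (PX / PY),
        ENNReal.ofReal (L p / p ^ 2) = ENNReal.ofReal ((s/2) * p ^ (-3/2:ℝ)) := by
      intro p hp
      have hpp : (0:ℝ) < p := hp0.trans hp
      congr 1
      rw [hLval p hpp, show (-3/2:ℝ) = 1/2 - 2 by norm_num, Real.rpow_sub hpp,
        show ((2:ℝ) : ℝ) = ((2:ℕ) : ℝ) by norm_num, Real.rpow_natCast]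
      ring
    rw [setLIntegral_congr_fun measurableSet_Ioi congr2,
      cfmm_lintB (PX/PY) (s/2) hp0 (by positivity)]
    congr 1
    rw [show 2 * (s/2) / Real.sqrt (PX/PY) = s / Real.sqrt (PX/PY) by ring, hX0eq]
  -- budget, with equality
  have hT3 : PX * X0 + PY * Y0 = B := by
    rw [hX0, hY0]; field_simp; ring
  have hFeas : Feasible PX PY B L X0 Y0 :=
    ⟨hmL, fun p _ => by rw [hL]; positivity, hX0p.le, hY0p.le, hT1.le, hT2.le, hT3.le⟩
  refine ⟨hT1, hT2, hT3, hFeas, ?_⟩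
  -- optimality
  intro L' X0' Y0' hF
  obtain ⟨hm', hnn', hX0'nn, hY0'nn, hc1, hc2, hbud⟩ := hF
  rw [cfmm_Ineff_reduce PX PY hPX hPY L hmL, cfmm_Ineff_reduce PX PY hPX hPY L' hm']
  -- setup for optimality computations
  set rX := Real.sqrt PX with hrXd
  set rY := Real.sqrt PY with hrYd
  have hrXp : 0 < rX := Real.sqrt_pos.mpr hPX
  have hrYp : 0 < rY := Real.sqrt_pos.mpr hPY
  have hrx : rX * rX = PX := Real.mul_self_sqrt hPX.le
  have hry : rY * rY = PY := Real.mul_self_sqrt hPY.le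
  have hsqrtp0 : Real.sqrt (PX/PY) = rX / rY := by
    rw [Real.sqrt_div hPX.le, hrXd, hrYd]
  have hsval : s = B / (2*(rX*rY)) := by
    have h : X0*Y0 = (B/(2*(rX*rY)))^2 := by
      rw [hX0, hY0, ← hrx, ← hry]; field_simp
    rw [hs, h, Real.sqrt_sq (by positivity)]
  have hWmin1 : ∀ p ∈ Set.Ioc (0:ℝ) (PX/PY), min PY (PX / p) = PY := by
    intro p hp
    refine min_eq_left ((le_div_iff₀ hp.1).mpr ?_)
    calc PY * p ≤ PY * (PX/PY) := by nlinarith [hp.2]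
      _ = PX := by field_simp
  have hWmin2 : ∀ p ∈ Set.Ioi (PX/PY), min PY (PX / p) = PX / p := by
    intro p hp
    have hpp : (0:ℝ) < p := hp0.trans hp
    refine min_eq_right ((div_le_iff₀ hpp).mpr ?_)
    calc PX = PY * (PX/PY) := by field_simp
      _ ≤ PY * p := by nlinarith [Set.mem_Ioi.mp hp]
  have hk1 : (0:ℝ) ≤ 2*PY/s := div_nonneg (by positivity) hsp.le
  have hk2 : (0:ℝ) ≤ 2*PX/s := div_nonneg (by positivity) hsp.le
  have halg : 2*(2*PY/s)*Real.sqrt (PX/PY) + 2*(2*PX/s)/Real.sqrt (PX/PY)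
      = 16*(PX*PY)/B := by
    rw [hsqrtp0, hsval, ← hrx, ← hry]
    field_simp
    ring
  -- value of the objective at L
  have hIL : (∫⁻ p in Set.Ioi (0:ℝ),
        ENNReal.ofReal (min PY (PX/p)) * (ENNReal.ofReal (L p))⁻¹)
      = ENNReal.ofReal (16 * (PX*PY) / B) := by
    rw [cfmm_lint_split (PX/PY) hp0]
    have e1 : ∀ p ∈ Set.Ioc (0:ℝ) (PX/PY),
        ENNReal.ofReal (min PY (PX/p)) * (ENNReal.ofReal (L p))⁻¹
          = ENNReal.ofReal ((2*PY/s) * p ^ (-1/2:ℝ)) := by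
      intro p hp
      rw [hWmin1 p hp, ← div_eq_mul_inv, ← ENNReal.ofReal_div_of_pos (hLpos p hp.1)]
      congr 1
      rw [hLval p hp.1, cfmm_div_sqrt1 PY s p hsp hp.1]
    have e2 : ∀ p ∈ Set.Ioi (PX/PY),
        ENNReal.ofReal (min PY (PX/p)) * (ENNReal.ofReal (L p))⁻¹
          = ENNReal.ofReal ((2*PX/s) * p ^ (-3/2:ℝ)) := by
      intro p hp
      have hpp : (0:ℝ) < p := hp0.trans hp
      rw [hWmin2 p hp, ← div_eq_mul_inv, ← ENNReal.ofReal_div_of_pos (hLpos p hpp)]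
      congr 1
      rw [hLval p hpp, cfmm_div_sqrt2 PX s p hsp hpp]
    rw [setLIntegral_congr_fun measurableSet_Ioc e1,
      setLIntegral_congr_fun measurableSet_Ioi e2,
      cfmm_lintA _ _ hp0 hk1, cfmm_lintB _ _ hp0 hk2,
      ← ENNReal.ofReal_add (mul_nonneg (mul_nonneg (by norm_num) hk1) (Real.sqrt_nonneg _))
        (div_nonneg (mul_nonneg (by norm_num) hk2) (Real.sqrt_nonneg _))]
    rw [halg]
  rw [hIL]
  by_cases htop : (∫⁻ p in Set.Ioi (0:ℝ),
      ENNReal.ofReal (min PY (PX/p)) * (ENNReal.ofReal (L' p))⁻¹) = ⊤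
  · rw [htop]; exact le_top
  -- almost-everywhere positivity of L'
  have hWm : Measurable fun p : ℝ => ENNReal.ofReal (min PY (PX/p)) :=
    (measurable_const.min (measurable_const.div measurable_id)).ennreal_ofReal
  have hintm : Measurable fun p : ℝ =>
      ENNReal.ofReal (min PY (PX/p)) * (ENNReal.ofReal (L' p))⁻¹ :=
    hWm.mul hm'.ennreal_ofReal.inv
  have haefin := ae_lt_top hintm htop
  have haeL : ∀ᵐ p ∂(volume.restrict (Set.Ioi (0:ℝ))), ENNReal.ofReal (L' p) ≠ 0 := by
    filter_upwards [haefin, ae_restrict_mem measurableSet_Ioi] with p h1 h2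
    intro h0
    have hW0 : ENNReal.ofReal (min PY (PX/p)) ≠ 0 := by
      simp only [ne_eq, ENNReal.ofReal_eq_zero, not_le]
      exact lt_min hPY (div_pos hPX h2)
    rw [h0, ENNReal.inv_zero, ENNReal.mul_top hW0] at h1
    exact lt_irrefl _ h1
  -- the weight function for the budget constraint
  set cfun : ℝ → ℝ := fun p => if p ≤ PX/PY then PY/p else PX/p^2 with hcfun
  have hcm : Measurable cfun := by
    refine Measurable.ite (measurableSet_le measurable_id measurable_const) ?_ ?_
    · exact measurable_const.div measurable_id
    · exact measurable_const.div (measurable_id.pow_const 2)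
  have hcnn : ∀ p ∈ Set.Ioi (0:ℝ), 0 ≤ cfun p := by
    intro p hp
    by_cases h : p ≤ PX/PY
    · simp only [hcfun, if_pos h]
      exact div_nonneg hPY.le (le_of_lt hp)
    · simp only [hcfun, if_neg h]
      exact div_nonneg hPX.le (by positivity)
  -- budget bound
  have hbudget : (∫⁻ p in Set.Ioi (0:ℝ), ENNReal.ofReal (cfun p * L' p))
      ≤ ENNReal.ofReal B := by
    rw [cfmm_lint_split (PX/PY) hp0]
    have e1 : ∀ p ∈ Set.Ioc (0:ℝ) (PX/PY),
        ENNReal.ofReal (cfun p * L' p)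
          = ENNReal.ofReal PY * ENNReal.ofReal (L' p / p) := by
      intro p hp
      rw [← ENNReal.ofReal_mul hPY.le]
      congr 1
      simp only [hcfun]
      rw [if_pos hp.2]
      ring
    have e2 : ∀ p ∈ Set.Ioi (PX/PY),
        ENNReal.ofReal (cfun p * L' p)
          = ENNReal.ofReal PX * ENNReal.ofReal (L' p / p^2) := by
      intro p hp
      rw [← ENNReal.ofReal_mul hPX.le]
      congr 1
      simp only [hcfun]
      rw [if_neg (not_le.mpr hp)]
      ring
    rw [setLIntegral_congr_fun measurableSet_Ioc e1,
      setLIntegral_congr_fun measurableSet_Ioi e2,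
      lintegral_const_mul' _ _ ENNReal.ofReal_ne_top,
      lintegral_const_mul' _ _ ENNReal.ofReal_ne_top]
    calc ENNReal.ofReal PY * (∫⁻ p in Set.Ioc (0:ℝ) (PX/PY), ENNReal.ofReal (L' p / p))
          + ENNReal.ofReal PX * (∫⁻ p in Set.Ioi (PX/PY), ENNReal.ofReal (L' p / p^2))
        ≤ ENNReal.ofReal PY * ENNReal.ofReal Y0' + ENNReal.ofReal PX * ENNReal.ofReal X0' := by
          gcongr
      _ = ENNReal.ofReal (PY * Y0' + PX * X0') := by
          rw [← ENNReal.ofReal_mul hPY.le, ← ENNReal.ofReal_mul hPX.le,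
            ← ENNReal.ofReal_add (mul_nonneg hPY.le hY0'nn) (mul_nonneg hPX.le hX0'nn)]
      _ ≤ ENNReal.ofReal B := ENNReal.ofReal_le_ofReal (by linarith)
  -- the cross integral
  have hcross : (∫⁻ p in Set.Ioi (0:ℝ),
      (ENNReal.ofReal (min PY (PX/p)) * ENNReal.ofReal (cfun p)) ^ (1/2:ℝ))
      = ENNReal.ofReal (4 * (rX * rY)) := by
    rw [cfmm_lint_split (PX/PY) hp0]
    have e1 : ∀ p ∈ Set.Ioc (0:ℝ) (PX/PY),
        (ENNReal.ofReal (min PY (PX/p)) * ENNReal.ofReal (cfun p)) ^ (1/2:ℝ)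
          = ENNReal.ofReal (PY * p ^ (-1/2:ℝ)) := by
      intro p hp
      have hcp : cfun p = PY / p := by simp only [hcfun]; rw [if_pos hp.2]
      rw [hWmin1 p hp, hcp, ← ENNReal.ofReal_mul hPY.le,
        ENNReal.ofReal_rpow_of_pos (mul_pos hPY (div_pos hPY hp.1)),
        cfmm_pow_half1 PY p hPY.le hp.1]
    have e2 : ∀ p ∈ Set.Ioi (PX/PY),
        (ENNReal.ofReal (min PY (PX/p)) * ENNReal.ofReal (cfun p)) ^ (1/2:ℝ)
          = ENNReal.ofReal (PX * p ^ (-3/2:ℝ)) := by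
      intro p hp
      have hpp : (0:ℝ) < p := hp0.trans hp
      have hcp : cfun p = PX / p^2 := by simp only [hcfun]; rw [if_neg (not_le.mpr hp)]
      rw [hWmin2 p hp, hcp, ← ENNReal.ofReal_mul (div_nonneg hPX.le hpp.le),
        ENNReal.ofReal_rpow_of_pos (mul_pos (div_pos hPX hpp) (div_pos hPX (by positivity))),
        cfmm_pow_half2 PX p hPX.le hpp]
    rw [setLIntegral_congr_fun measurableSet_Ioc e1,
      setLIntegral_congr_fun measurableSet_Ioi e2,
      cfmm_lintA _ _ hp0 hPY.le, cfmm_lintB _ _ hp0 hPX.le,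
      ← ENNReal.ofReal_add (mul_nonneg (mul_nonneg (by norm_num) hPY.le) (Real.sqrt_nonneg _))
        (div_nonneg (mul_nonneg (by norm_num) hPX.le) (Real.sqrt_nonneg _))]
    congr 1
    rw [hsqrtp0, ← hrx, ← hry]
    field_simp
    ring
  -- Cauchy–Schwarz
  set f : ℝ → ℝ≥0∞ := fun p =>
    (ENNReal.ofReal (min PY (PX/p)) * (ENNReal.ofReal (L' p))⁻¹) ^ (1/2:ℝ) with hfd
  set g : ℝ → ℝ≥0∞ := fun p => (ENNReal.ofReal (cfun p * L' p)) ^ (1/2:ℝ) with hgd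
  have hfm : Measurable f := ENNReal.continuous_rpow_const.measurable.comp hintm
  have hgm : Measurable g :=
    ENNReal.continuous_rpow_const.measurable.comp (hcm.mul hm').ennreal_ofReal
  have hconj : Real.HolderConjugate 2 2 := Real.holderConjugate_iff.mpr ⟨one_lt_two, by norm_num⟩
  have hCS := ENNReal.lintegral_mul_le_Lp_mul_Lq (volume.restrict (Set.Ioi (0:ℝ))) hconj
    hfm.aemeasurable hgm.aemeasurable
  have hfg : (∫⁻ p in Set.Ioi (0:ℝ), (f * g) p)
      = ∫⁻ p in Set.Ioi (0:ℝ),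
          (ENNReal.ofReal (min PY (PX/p)) * ENNReal.ofReal (cfun p)) ^ (1/2:ℝ) := by
    refine lintegral_congr_ae ?_
    filter_upwards [haeL, ae_restrict_mem measurableSet_Ioi] with p hLp hp
    have hcpnn : 0 ≤ cfun p := hcnn p hp
    show f p * g p = _
    rw [hfd, hgd]
    simp only
    rw [ENNReal.ofReal_mul hcpnn, ← ENNReal.mul_rpow_of_nonneg _ _ (by norm_num : (0:ℝ) ≤ 1/2)]
    congr 1
    calc ENNReal.ofReal (min PY (PX/p)) * (ENNReal.ofReal (L' p))⁻¹
          * (ENNReal.ofReal (cfun p) * ENNReal.ofReal (L' p))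
        = ENNReal.ofReal (min PY (PX/p)) * ENNReal.ofReal (cfun p)
            * ((ENNReal.ofReal (L' p))⁻¹ * ENNReal.ofReal (L' p)) := by ring
      _ = ENNReal.ofReal (min PY (PX/p)) * ENNReal.ofReal (cfun p) := by
          rw [ENNReal.inv_mul_cancel hLp ENNReal.ofReal_ne_top, mul_one]
  have hf2 : (∫⁻ p in Set.Ioi (0:ℝ), f p ^ (2:ℝ))
      = ∫⁻ p in Set.Ioi (0:ℝ),
          ENNReal.ofReal (min PY (PX/p)) * (ENNReal.ofReal (L' p))⁻¹ := by
    refine lintegral_congr fun p => ?_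
    rw [hfd]
    simp only
    rw [← ENNReal.rpow_mul, show (1/2:ℝ)*2 = 1 by norm_num, ENNReal.rpow_one]
  have hg2 : (∫⁻ p in Set.Ioi (0:ℝ), g p ^ (2:ℝ))
      = ∫⁻ p in Set.Ioi (0:ℝ), ENNReal.ofReal (cfun p * L' p) := by
    refine lintegral_congr fun p => ?_
    rw [hgd]
    simp only
    rw [← ENNReal.rpow_mul, show (1/2:ℝ)*2 = 1 by norm_num, ENNReal.rpow_one]
  have h4r : ENNReal.ofReal (4 * (rX * rY))
      ≤ (∫⁻ p in Set.Ioi (0:ℝ),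
            ENNReal.ofReal (min PY (PX/p)) * (ENNReal.ofReal (L' p))⁻¹) ^ (1/2:ℝ)
          * ENNReal.ofReal B ^ (1/2:ℝ) := by
    calc ENNReal.ofReal (4 * (rX*rY))
        = ∫⁻ p in Set.Ioi (0:ℝ), (f * g) p := by rw [hfg, hcross]
      _ ≤ (∫⁻ p in Set.Ioi (0:ℝ), f p ^ (2:ℝ)) ^ (1/(2:ℝ))
            * (∫⁻ p in Set.Ioi (0:ℝ), g p ^ (2:ℝ)) ^ (1/(2:ℝ)) := hCS
      _ ≤ _ := by
          rw [hf2, hg2]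
          exact mul_le_mul_right (ENNReal.rpow_le_rpow hbudget (by norm_num)) _
  have hsq2 : ENNReal.ofReal (16 * (PX*PY))
      ≤ (∫⁻ p in Set.Ioi (0:ℝ),
          ENNReal.ofReal (min PY (PX/p)) * (ENNReal.ofReal (L' p))⁻¹) * ENNReal.ofReal B := by
    have h := ENNReal.rpow_le_rpow h4r (by norm_num : (0:ℝ) ≤ 2)
    rw [ENNReal.mul_rpow_of_nonneg _ _ (by norm_num : (0:ℝ) ≤ 2),
      ← ENNReal.rpow_mul, ← ENNReal.rpow_mul, show (1/2:ℝ)*2 = 1 by norm_num,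
      ENNReal.rpow_one, ENNReal.rpow_one] at h
    have hr2 : ((4*(rX*rY)) ^ (2:ℝ)) = 16*(PX*PY) := by
      rw [show (2:ℝ) = ((2:ℕ):ℝ) by norm_num, Real.rpow_natCast, ← hrx, ← hry]
      ring
    rwa [ENNReal.ofReal_rpow_of_pos (mul_pos (by norm_num) (mul_pos hrXp hrYp)), hr2] at h
  rw [ENNReal.ofReal_div_of_pos hB]
  exact (ENNReal.div_le_iff_le_mul (Or.inl (ENNReal.ofReal_pos.mpr hB).ne')
    (Or.inl ENNReal.ofReal_ne_top)).mpr hsq2
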